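/- In a finite-horizon MDP, let π and π* be stochastic policies with ρ₀(s) > 0, P(s'|s,a) > 0, π(a|s) > 0 and π*(a|s) > 0 for all s, s', a. Then the reverse KL divergence between trajectory distributions equals T times the expected reverse KL divergence between action distributions on states induced by π: ∑_τ ρ_π(τ)·log(ρ_π(τ)/ρ_{π*}(τ)) = T · ∑_{s∈S} ρ_π(s) · ∑_{a∈A} π(a|s)·log(π(a|s)/π*(a|s)). -/
import Mathlib


noncomputable section

/-- Time-`t` state distribution of a policy `π` in a finite MDP:
`ρ_π^0 = ρ₀` and `ρ_π^{t+1}(s) = ∑_{s',a} ρ_π^t(s') · π(a|s') · P(s|s',a)`. -/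
def stateDist {S A : Type*} [Fintype S] [Fintype A]
    (ρ₀ : S → ℝ) (P : S → A → S → ℝ) (π : S → A → ℝ) : ℕ → S → ℝ
  | 0 => ρ₀
  | t + 1 => fun s => ∑ s' : S, ∑ a : A, stateDist ρ₀ P π t s' * π s' a * P s' a s

/-- Average state distribution `ρ_π(s) = (1/T) ∑_{t=1}^T ρ_π^{t-1}(s)`. -/
def avgStateDist {S A : Type*} [Fintype S] [Fintype A]
    (ρ₀ : S → ℝ) (P : S → A → S → ℝ) (π : S → A → ℝ) (T : ℕ) (s : S) : ℝ :=
  (1 / (T : ℝ)) * ∑ t ∈ Finset.range T, stateDist ρ₀ P π t s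

/-- The state `s_{t-1}` preceding the `t`-th action in the trajectory
`τ = (s₀, a₁, s₁, …, a_T, s_T)`, encoded as `τ = (s₀, fun t => (a_{t+1}, s_{t+1}))`. -/
def prevState {S A : Type*} {T : ℕ} (τ : S × (Fin T → A × S)) (t : Fin T) : S :=
  if _h : (t : ℕ) = 0 then τ.1
  else (τ.2 ⟨(t : ℕ) - 1, lt_of_le_of_lt (Nat.pred_le _) t.isLt⟩).2

/-- Probability of a trajectory `τ = (s₀, a₁, s₁, …, a_T, s_T)` induced by policy `π`:
`ρ_π(τ) = ρ₀(s₀) ∏_{t=1}^T π(a_t|s_{t-1}) P(s_t|s_{t-1},a_t)`. -/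
def trajProb {S A : Type*} {T : ℕ}
    (ρ₀ : S → ℝ) (P : S → A → S → ℝ) (π : S → A → ℝ) (τ : S × (Fin T → A × S)) : ℝ :=
  ρ₀ τ.1 * ∏ t : Fin T,
    (π (prevState τ t) (τ.2 t).1 * P (prevState τ t) (τ.2 t).1 (τ.2 t).2)


section Aux

variable {S A : Type*} [Fintype S] [Fintype A]

/-- Last state of a trajectory. -/
def lastState : ∀ {T : ℕ}, S × (Fin T → A × S) → S
  | 0, τ => τ.1
  | _+1, τ => (τ.2 (Fin.last _)).2

/-- Equivalence splitting off the last step of a trajectory. -/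
def snocTraj {T : ℕ} : (S × (Fin T → A × S)) × (A × S) ≃ S × (Fin (T+1) → A × S) where
  toFun x := (x.1.1, Fin.snoc x.1.2 x.2)
  invFun τ := ((τ.1, Fin.init τ.2), τ.2 (Fin.last T))
  left_inv x := by simp [Fin.init_snoc, Fin.snoc_last]
  right_inv τ := by simp [Fin.snoc_init_self]

omit [Fintype S] [Fintype A] in
lemma snoc_at {T : ℕ} (f : Fin T → A × S) (p : A × S) (k : ℕ) (hk : k < T) (hk' : k < T + 1) :
    (Fin.snoc f p : Fin (T+1) → A × S) ⟨k, hk'⟩ = f ⟨k, hk⟩ := by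
  have e : (⟨k, hk'⟩ : Fin (T+1)) = Fin.castSucc ⟨k, hk⟩ := rfl
  rw [e, Fin.snoc_castSucc]

lemma prevState_snoc_castSucc {T : ℕ} (τ' : S × (Fin T → A × S)) (p : A × S) (t : Fin T) :
    prevState (τ'.1, Fin.snoc τ'.2 p) t.castSucc = prevState τ' t := by
  unfold prevState
  rcases Nat.eq_zero_or_pos t.val with h | h
  · simp [Fin.coe_castSucc, h]
  · simp only [Fin.coe_castSucc]
    rw [dif_neg (by omega), dif_neg (by omega)]
    exact congrArg Prod.snd (snoc_at τ'.2 p (t.val - 1) (by omega) (by omega))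

lemma prevState_snoc_last {T : ℕ} (τ' : S × (Fin T → A × S)) (p : A × S) :
    prevState (τ'.1, Fin.snoc τ'.2 p) (Fin.last T) = lastState τ' := by
  unfold prevState
  cases T with
  | zero => simp [lastState]
  | succ T' =>
    rw [dif_neg (by simp)]
    exact congrArg Prod.snd (snoc_at τ'.2 p T' (by omega) (by omega))

lemma trajProb_snoc (ρ₀ : S → ℝ) (P : S → A → S → ℝ) (π : S → A → ℝ) {T : ℕ}
    (τ' : S × (Fin T → A × S)) (p : A × S) :
    trajProb ρ₀ P π (τ'.1, Fin.snoc τ'.2 p) =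
      trajProb ρ₀ P π τ' * (π (lastState τ') p.1 * P (lastState τ') p.1 p.2) := by
  unfold trajProb
  rw [Fin.prod_univ_castSucc]
  simp only [Fin.snoc_castSucc, Fin.snoc_last, prevState_snoc_castSucc, prevState_snoc_last]
  ring

lemma lastMarginal (ρ₀ : S → ℝ) (P : S → A → S → ℝ) (π : S → A → ℝ) :
    ∀ (T : ℕ) (h : S → ℝ),
      ∑ τ : S × (Fin T → A × S), trajProb ρ₀ P π τ * h (lastState τ) =
      ∑ s : S, stateDist ρ₀ P π T s * h s
  | 0, h => by
    rw [Fintype.sum_prod_type]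
    simp [trajProb, lastState, stateDist]
  | T+1, h => by
    have key : ∀ (τ' : S × (Fin T → A × S)) (p : A × S),
        trajProb ρ₀ P π (snocTraj (τ', p)) * h (lastState (snocTraj (τ', p))) =
        trajProb ρ₀ P π τ' * (π (lastState τ') p.1 * P (lastState τ') p.1 p.2 * h p.2) := by
      intro τ' p
      have h1 : lastState (snocTraj (τ', p)) = p.2 := by
        simp [snocTraj, lastState, Fin.snoc_last]
      rw [h1, show (snocTraj (τ', p) : S × (Fin (T+1) → A × S)) = (τ'.1, Fin.snoc τ'.2 p) from rfl,
        trajProb_snoc]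
      ring
    calc ∑ τ : S × (Fin (T+1) → A × S), trajProb ρ₀ P π τ * h (lastState τ)
        = ∑ x : (S × (Fin T → A × S)) × (A × S),
            trajProb ρ₀ P π (snocTraj x) * h (lastState (snocTraj x)) :=
          (Equiv.sum_comp snocTraj (fun τ => trajProb ρ₀ P π τ * h (lastState τ))).symm
      _ = ∑ τ' : S × (Fin T → A × S), trajProb ρ₀ P π τ' *
            (∑ p : A × S, π (lastState τ') p.1 * P (lastState τ') p.1 p.2 * h p.2) := by
          rw [Fintype.sum_prod_type]
          refine Finset.sum_congr rfl fun τ' _ => ?_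
          rw [Finset.mul_sum]
          exact Finset.sum_congr rfl fun p _ => key τ' p
      _ = ∑ s' : S, stateDist ρ₀ P π T s' *
            (∑ p : A × S, π s' p.1 * P s' p.1 p.2 * h p.2) :=
          lastMarginal ρ₀ P π T
            (fun s' => ∑ p : A × S, π s' p.1 * P s' p.1 p.2 * h p.2)
      _ = ∑ s' : S, ∑ a : A, ∑ s : S, stateDist ρ₀ P π T s' * π s' a * P s' a s * h s := by
          refine Finset.sum_congr rfl fun s' _ => ?_
          rw [Fintype.sum_prod_type, Finset.mul_sum]
          refine Finset.sum_congr rfl fun a _ => ?_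
          rw [Finset.mul_sum]
          exact Finset.sum_congr rfl fun s _ => by ring
      _ = ∑ s' : S, ∑ s : S, ∑ a : A, stateDist ρ₀ P π T s' * π s' a * P s' a s * h s :=
          Finset.sum_congr rfl fun s' _ => Finset.sum_comm
      _ = ∑ s : S, ∑ s' : S, ∑ a : A, stateDist ρ₀ P π T s' * π s' a * P s' a s * h s :=
          Finset.sum_comm
      _ = ∑ s : S, stateDist ρ₀ P π (T+1) s * h s := by
          refine Finset.sum_congr rfl fun s _ => ?_
          show _ = (∑ s' : S, ∑ a : A, stateDist ρ₀ P π T s' * π s' a * P s' a s) * h s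
          rw [Finset.sum_mul]
          exact Finset.sum_congr rfl fun s' _ => by rw [Finset.sum_mul]

lemma marginal (ρ₀ : S → ℝ) (P : S → A → S → ℝ) (π : S → A → ℝ)
    (hPsum : ∀ s a, ∑ s', P s a s' = 1) (hπsum : ∀ s, ∑ a, π s a = 1) :
    ∀ (T : ℕ) (t : Fin T) (g : S → A → ℝ),
      ∑ τ : S × (Fin T → A × S), trajProb ρ₀ P π τ * g (prevState τ t) ((τ.2 t).1) =
      ∑ s : S, stateDist ρ₀ P π t s * ∑ a : A, π s a * g s a
  | 0, t, g => t.elim0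
  | T+1, t, g => by
    refine Fin.lastCases ?_ ?_ t
    · -- t = last
      have key : ∀ (τ' : S × (Fin T → A × S)) (a : A) (s : S),
          trajProb ρ₀ P π (snocTraj (τ', (a, s))) *
            g (prevState (snocTraj (τ', (a, s))) (Fin.last T))
              (((snocTraj (τ', (a, s))).2 (Fin.last T)).1) =
          trajProb ρ₀ P π τ' * (π (lastState τ') a * g (lastState τ') a) *
            P (lastState τ') a s := by
        intro τ' a s
        rw [show (snocTraj (τ', (a, s)) : S × (Fin (T+1) → A × S)) =
          (τ'.1, Fin.snoc τ'.2 (a, s)) from rfl, trajProb_snoc, prevState_snoc_last]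
        simp only [Fin.snoc_last]
        ring
      calc ∑ τ : S × (Fin (T+1) → A × S), trajProb ρ₀ P π τ *
              g (prevState τ (Fin.last T)) ((τ.2 (Fin.last T)).1)
          = ∑ x : (S × (Fin T → A × S)) × (A × S),
              trajProb ρ₀ P π (snocTraj x) *
              g (prevState (snocTraj x) (Fin.last T)) (((snocTraj x).2 (Fin.last T)).1) :=
            (Equiv.sum_comp snocTraj _).symm
        _ = ∑ τ' : S × (Fin T → A × S), trajProb ρ₀ P π τ' *
              (∑ a : A, π (lastState τ') a * g (lastState τ') a) := by
            rw [Fintype.sum_prod_type]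
            refine Finset.sum_congr rfl fun τ' _ => ?_
            rw [Fintype.sum_prod_type]
            have inner : ∀ a : A,
                ∑ s : S, trajProb ρ₀ P π (snocTraj (τ', (a, s))) *
                  g (prevState (snocTraj (τ', (a, s))) (Fin.last T))
                    (((snocTraj (τ', (a, s))).2 (Fin.last T)).1) =
                trajProb ρ₀ P π τ' * (π (lastState τ') a * g (lastState τ') a) := by
              intro a
              rw [Finset.sum_congr rfl fun s _ => key τ' a s, ← Finset.mul_sum, hPsum, mul_one]
            rw [Finset.sum_congr rfl fun a _ => inner a, ← Finset.mul_sum]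
        _ = ∑ s : S, stateDist ρ₀ P π T s * ∑ a : A, π s a * g s a :=
            lastMarginal ρ₀ P π T (fun s => ∑ a : A, π s a * g s a)
        _ = ∑ s : S, stateDist ρ₀ P π ((Fin.last T : Fin (T+1)) : ℕ) s *
              ∑ a : A, π s a * g s a := by rw [Fin.val_last]
    · -- t = castSucc t'
      intro t'
      have step : ∀ (τ' : S × (Fin T → A × S)) (p : A × S),
          trajProb ρ₀ P π (snocTraj (τ', p)) *
            g (prevState (snocTraj (τ', p)) t'.castSucc)
              (((snocTraj (τ', p)).2 t'.castSucc).1) =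
          trajProb ρ₀ P π τ' * g (prevState τ' t') ((τ'.2 t').1) *
            (π (lastState τ') p.1 * P (lastState τ') p.1 p.2) := by
        intro τ' p
        rw [show (snocTraj (τ', p) : S × (Fin (T+1) → A × S)) =
          (τ'.1, Fin.snoc τ'.2 p) from rfl, trajProb_snoc, prevState_snoc_castSucc]
        simp only [Fin.snoc_castSucc]
        ring
      calc ∑ τ : S × (Fin (T+1) → A × S), trajProb ρ₀ P π τ *
              g (prevState τ t'.castSucc) ((τ.2 t'.castSucc).1)
          = ∑ x : (S × (Fin T → A × S)) × (A × S),
              trajProb ρ₀ P π (snocTraj x) *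
              g (prevState (snocTraj x) t'.castSucc) (((snocTraj x).2 t'.castSucc).1) :=
            (Equiv.sum_comp snocTraj _).symm
        _ = ∑ τ' : S × (Fin T → A × S), trajProb ρ₀ P π τ' *
              g (prevState τ' t') ((τ'.2 t').1) := by
            rw [Fintype.sum_prod_type]
            refine Finset.sum_congr rfl fun τ' _ => ?_
            rw [Finset.sum_congr rfl fun p _ => step τ' p, ← Finset.mul_sum]
            have hnorm : ∑ p : A × S, π (lastState τ') p.1 * P (lastState τ') p.1 p.2 = 1 := by
              rw [Fintype.sum_prod_type]
              simp only [← Finset.mul_sum]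
              simp only [hPsum, mul_one]
              exact hπsum _
            rw [hnorm, mul_one]
        _ = ∑ s : S, stateDist ρ₀ P π t' s * ∑ a : A, π s a * g s a :=
            marginal ρ₀ P π hPsum hπsum T t' g
        _ = ∑ s : S, stateDist ρ₀ P π ((t'.castSucc : Fin (T+1)) : ℕ) s *
              ∑ a : A, π s a * g s a := by rw [Fin.coe_castSucc]

end Aux

/-- **Reverse KL identity.** The reverse KL divergence between trajectory distributions
equals `T` times the expected reverse KL divergence between action distributions on
states induced by `π`. -/
theorem traj_rkl_eq_action_rkl
    {S A : Type*} [Fintype S] [Nonempty S] [Fintype A] [Nonempty A]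
    (ρ₀ : S → ℝ) (hρ₀pos : ∀ s, 0 < ρ₀ s) (hρ₀sum : ∑ s, ρ₀ s = 1)
    (P : S → A → S → ℝ) (hPpos : ∀ s a s', 0 < P s a s')
    (hPsum : ∀ s a, ∑ s', P s a s' = 1)
    (T : ℕ) (hT : 1 ≤ T)
    (π πstar : S → A → ℝ)
    (hπpos : ∀ s a, 0 < π s a) (hπsum : ∀ s, ∑ a, π s a = 1)
    (hπstarpos : ∀ s a, 0 < πstar s a) (hπstarsum : ∀ s, ∑ a, πstar s a = 1) :
    ∑ τ : S × (Fin T → A × S),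
        trajProb ρ₀ P π τ * Real.log (trajProb ρ₀ P π τ / trajProb ρ₀ P πstar τ) =
      (T : ℝ) * ∑ s : S, avgStateDist ρ₀ P π T s *
        ∑ a : A, π s a * Real.log (π s a / πstar s a) := by
  have hstarpos : ∀ τ : S × (Fin T → A × S), 0 < trajProb ρ₀ P πstar τ := by
    intro τ
    exact mul_pos (hρ₀pos _) (Finset.prod_pos fun t _ => mul_pos (hπstarpos _ _) (hPpos _ _ _))
  have hlog : ∀ τ : S × (Fin T → A × S),
      Real.log (trajProb ρ₀ P π τ / trajProb ρ₀ P πstar τ) =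
      ∑ t : Fin T, Real.log (π (prevState τ t) ((τ.2 t).1) / πstar (prevState τ t) ((τ.2 t).1)) := by
    intro τ
    have hratio : trajProb ρ₀ P π τ / trajProb ρ₀ P πstar τ =
        ∏ t : Fin T, (π (prevState τ t) ((τ.2 t).1) / πstar (prevState τ t) ((τ.2 t).1)) := by
      rw [div_eq_iff (ne_of_gt (hstarpos τ))]
      unfold trajProb
      rw [mul_left_comm, ← Finset.prod_mul_distrib]
      refine congrArg _ (Finset.prod_congr rfl fun t _ => ?_)
      rw [div_mul_eq_mul_div, eq_div_iff (ne_of_gt (hπstarpos _ _))]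
      ring
    rw [hratio, Real.log_prod]
    intro t _
    exact ne_of_gt (div_pos (hπpos _ _) (hπstarpos _ _))
  calc ∑ τ : S × (Fin T → A × S),
        trajProb ρ₀ P π τ * Real.log (trajProb ρ₀ P π τ / trajProb ρ₀ P πstar τ)
      = ∑ t : Fin T, ∑ τ : S × (Fin T → A × S), trajProb ρ₀ P π τ *
          Real.log (π (prevState τ t) ((τ.2 t).1) / πstar (prevState τ t) ((τ.2 t).1)) := by
        rw [Finset.sum_comm]
        refine Finset.sum_congr rfl fun τ _ => ?_
        rw [hlog τ, Finset.mul_sum]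
    _ = ∑ t : Fin T, ∑ s : S, stateDist ρ₀ P π t s *
          ∑ a : A, π s a * Real.log (π s a / πstar s a) := by
        refine Finset.sum_congr rfl fun t _ => ?_
        exact marginal ρ₀ P π hPsum hπsum T t (fun s a => Real.log (π s a / πstar s a))
    _ = ∑ t ∈ Finset.range T, ∑ s : S, stateDist ρ₀ P π t s *
          ∑ a : A, π s a * Real.log (π s a / πstar s a) :=
        Fin.sum_univ_eq_sum_range
          (fun t => ∑ s : S, stateDist ρ₀ P π t s *
            ∑ a : A, π s a * Real.log (π s a / πstar s a)) T
    _ = (T : ℝ) * ∑ s : S, avgStateDist ρ₀ P π T s *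
          ∑ a : A, π s a * Real.log (π s a / πstar s a) := by
        unfold avgStateDist
        rw [Finset.mul_sum, Finset.sum_comm]
        refine Finset.sum_congr rfl fun s _ => ?_
        rw [← Finset.sum_mul]
        have hTne : (T : ℝ) ≠ 0 := Nat.cast_ne_zero.mpr (by omega)
        field_simp


end
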